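/- Let E1 be a two-dimensional vector space over ℂ and let E2 ⊂ E1 ⊗ E1, E3 ⊂ E1 ⊗ E1 ⊗ E1 be two-dimensional subspaces with E3 ⊂ (E2 ⊗ E1) ∩ (E1 ⊗ E2). If rank E2 = 1, then there exist a basis {x, y} of E1 and a number λ ∈ ℂ, λ ≠ 0, such that E3 = span{x ⊗ x ⊗ x, y ⊗ x ⊗ x + λ x ⊗ y ⊗ x + λ² x ⊗ x ⊗ y}. -/

import Mathlib

open TensorProduct

/-- The rank of the restriction of a quadratic form `q` on `M` to a submodule `L`,
defined as the rank of the polar (bilinear) form of the restriction. -/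
noncomputable def quadRankOn {M : Type*} [AddCommGroup M] [Module ℂ M]
    (q : QuadraticForm ℂ M) (L : Submodule ℂ M) : ℕ :=
  Module.finrank ℂ (LinearMap.range (QuadraticMap.polarBilin (q.comp L.subtype)))

/-- The subspace `L12 ⊗ L3` of `(L1 ⊗ L2) ⊗ L3`. -/
noncomputable def leftTensorSub {L1 L2 L3 : Type*} [AddCommGroup L1] [Module ℂ L1]
    [AddCommGroup L2] [Module ℂ L2] [AddCommGroup L3] [Module ℂ L3]
    (L12 : Submodule ℂ (L1 ⊗[ℂ] L2)) : Submodule ℂ ((L1 ⊗[ℂ] L2) ⊗[ℂ] L3) :=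
  LinearMap.range (TensorProduct.mapIncl L12 (⊤ : Submodule ℂ L3))

/-- The subspace `L1 ⊗ L23` of `(L1 ⊗ L2) ⊗ L3`, transported along the associator. -/
noncomputable def rightTensorSub {L1 L2 L3 : Type*} [AddCommGroup L1] [Module ℂ L1]
    [AddCommGroup L2] [Module ℂ L2] [AddCommGroup L3] [Module ℂ L3]
    (L23 : Submodule ℂ (L2 ⊗[ℂ] L3)) : Submodule ℂ ((L1 ⊗[ℂ] L2) ⊗[ℂ] L3) :=
  Submodule.map (TensorProduct.assoc ℂ L1 L2 L3).symm.toLinearMap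
    (LinearMap.range (TensorProduct.mapIncl (⊤ : Submodule ℂ L1) L23))

section Aux
variable {E1 : Type*} [AddCommGroup E1] [Module ℂ E1]

noncomputable def slice3 (f : E1 →ₗ[ℂ] ℂ) : (E1 ⊗[ℂ] E1) ⊗[ℂ] E1 →ₗ[ℂ] E1 ⊗[ℂ] E1 :=
  (TensorProduct.rid ℂ (E1 ⊗[ℂ] E1)).toLinearMap ∘ₗ LinearMap.lTensor (E1 ⊗[ℂ] E1) f

noncomputable def slice1 (f : E1 →ₗ[ℂ] ℂ) : (E1 ⊗[ℂ] E1) ⊗[ℂ] E1 →ₗ[ℂ] E1 ⊗[ℂ] E1 :=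
  LinearMap.rTensor E1 ((TensorProduct.lid ℂ E1).toLinearMap ∘ₗ LinearMap.rTensor E1 f)

lemma slice3_tmul (f : E1 →ₗ[ℂ] ℂ) (m : E1 ⊗[ℂ] E1) (w : E1) :
    slice3 f (m ⊗ₜ[ℂ] w) = f w • m := by
  simp [slice3]

lemma slice1_tmul (f : E1 →ₗ[ℂ] ℂ) (a b c : E1) :
    slice1 f ((a ⊗ₜ[ℂ] b) ⊗ₜ[ℂ] c) = f a • (b ⊗ₜ[ℂ] c) := by
  simp [slice1, TensorProduct.smul_tmul']

lemma slice3_mem_of_mem_left {E2 : Submodule ℂ (E1 ⊗[ℂ] E1)} {T : (E1 ⊗[ℂ] E1) ⊗[ℂ] E1}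
    (hT : T ∈ leftTensorSub (L3 := E1) E2) (f : E1 →ₗ[ℂ] ℂ) : slice3 f T ∈ E2 := by
  obtain ⟨t, rfl⟩ := hT
  induction t using TensorProduct.induction_on with
  | zero => simp
  | tmul p w =>
      obtain ⟨p, hp⟩ := p; obtain ⟨w, _⟩ := w
      have : (TensorProduct.mapIncl E2 (⊤ : Submodule ℂ E1)) (⟨p, hp⟩ ⊗ₜ[ℂ] ⟨w, trivial⟩)
          = p ⊗ₜ[ℂ] w := rfl
      rw [this, slice3_tmul]
      exact E2.smul_mem _ hp
  | add s t hs ht =>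
      rw [map_add, map_add]
      exact E2.add_mem hs ht

lemma slice1_assoc_symm (f : E1 →ₗ[ℂ] ℂ) (u : E1) (p : E1 ⊗[ℂ] E1) :
    slice1 f ((TensorProduct.assoc ℂ E1 E1 E1).symm (u ⊗ₜ[ℂ] p)) = f u • p := by
  induction p using TensorProduct.induction_on with
  | zero => simp
  | tmul a c => simp [slice1_tmul]
  | add s t hs ht => rw [tmul_add, map_add, map_add, hs, ht, smul_add]

lemma slice1_mem_of_mem_right {E2 : Submodule ℂ (E1 ⊗[ℂ] E1)} {T : (E1 ⊗[ℂ] E1) ⊗[ℂ] E1}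
    (hT : T ∈ rightTensorSub (L1 := E1) E2) (f : E1 →ₗ[ℂ] ℂ) : slice1 f T ∈ E2 := by
  obtain ⟨S, hS, rfl⟩ := hT
  obtain ⟨t, rfl⟩ := hS
  induction t using TensorProduct.induction_on with
  | zero => simp
  | tmul u p =>
      obtain ⟨u, _⟩ := u; obtain ⟨p, hp⟩ := p
      have : (TensorProduct.mapIncl (⊤ : Submodule ℂ E1) E2) (⟨u, trivial⟩ ⊗ₜ[ℂ] ⟨p, hp⟩)
          = u ⊗ₜ[ℂ] p := rfl
      rw [this, LinearEquiv.coe_toLinearMap, slice1_assoc_symm]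
      exact E2.smul_mem _ hp
  | add s t hs ht =>
      rw [map_add, map_add, map_add]
      exact E2.add_mem hs ht

lemma repr_slice3 (w : Module.Basis (Fin 2) ℂ E1) (T : (E1 ⊗[ℂ] E1) ⊗[ℂ] E1) (i j k : Fin 2) :
    (w.tensorProduct w).repr (slice3 (w.coord k) T) (i, j)
      = ((w.tensorProduct w).tensorProduct w).repr T ((i, j), k) := by
  have h : (Module.Basis.coord (w.tensorProduct w) (i, j)) ∘ₗ slice3 (w.coord k)
      = Module.Basis.coord ((w.tensorProduct w).tensorProduct w) ((i, j), k) := by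
    apply Module.Basis.ext ((w.tensorProduct w).tensorProduct w)
    rintro ⟨⟨i', j'⟩, k'⟩
    simp only [Module.Basis.tensorProduct_apply, LinearMap.comp_apply, slice3_tmul,
      Module.Basis.coord_apply, Module.Basis.repr_self, map_smul, Finsupp.smul_apply,
      Finsupp.single_apply, smul_eq_mul]
    by_cases hk : k' = k <;> by_cases hij : i' = i ∧ j' = j <;>
      simp_all [Prod.ext_iff]
  exact congrArg (fun f => f T) (congrArg DFunLike.coe h) ▸ rfl

lemma repr_slice1 (w : Module.Basis (Fin 2) ℂ E1) (T : (E1 ⊗[ℂ] E1) ⊗[ℂ] E1) (i j k : Fin 2) :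
    (w.tensorProduct w).repr (slice1 (w.coord i) T) (j, k)
      = ((w.tensorProduct w).tensorProduct w).repr T ((i, j), k) := by
  have h : (Module.Basis.coord (w.tensorProduct w) (j, k)) ∘ₗ slice1 (w.coord i)
      = Module.Basis.coord ((w.tensorProduct w).tensorProduct w) ((i, j), k) := by
    apply Module.Basis.ext ((w.tensorProduct w).tensorProduct w)
    rintro ⟨⟨i', j'⟩, k'⟩
    simp only [Module.Basis.tensorProduct_apply, LinearMap.comp_apply, slice1_tmul,
      Module.Basis.coord_apply, Module.Basis.repr_self, map_smul, Finsupp.smul_apply,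
      Finsupp.single_apply, smul_eq_mul]
    by_cases hi : i' = i <;> by_cases hjk : j' = j ∧ k' = k <;>
      simp_all [Prod.ext_iff]
  exact congrArg (fun f => f T) (congrArg DFunLike.coe h) ▸ rfl

lemma q_formula (w : Module.Basis (Fin 2) ℂ E1) (q : QuadraticForm ℂ (E1 ⊗[ℂ] E1))
    (hq : ∀ v : E1 ⊗[ℂ] E1, q v = 0 ↔ ∃ x y : E1, v = x ⊗ₜ[ℂ] y) :
    ∃ c : ℂ, c ≠ 0 ∧ ∀ v : E1 ⊗[ℂ] E1,
      q v = c * ((w.tensorProduct w).repr v (0,0) * (w.tensorProduct w).repr v (1,1)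
        - (w.tensorProduct w).repr v (0,1) * (w.tensorProduct w).repr v (1,0)) := by
  classical
  have hq0 : ∀ i j : Fin 2, q (w i ⊗ₜ[ℂ] w j) = 0 := fun i j => (hq _).2 ⟨w i, w j, rfl⟩
  have hp1 : QuadraticMap.polar (⇑q) (w 0 ⊗ₜ[ℂ] w 0) (w 0 ⊗ₜ[ℂ] w 1) = 0 := by
    have h : q (w 0 ⊗ₜ[ℂ] w 0 + w 0 ⊗ₜ[ℂ] w 1) = 0 := by
      rw [hq]; exact ⟨w 0, w 0 + w 1, by rw [tmul_add]⟩
    simp [QuadraticMap.polar, h, hq0]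
  have hp2 : QuadraticMap.polar (⇑q) (w 0 ⊗ₜ[ℂ] w 0) (w 1 ⊗ₜ[ℂ] w 0) = 0 := by
    have h : q (w 0 ⊗ₜ[ℂ] w 0 + w 1 ⊗ₜ[ℂ] w 0) = 0 := by
      rw [hq]; exact ⟨w 0 + w 1, w 0, by rw [add_tmul]⟩
    simp [QuadraticMap.polar, h, hq0]
  have hp3 : QuadraticMap.polar (⇑q) (w 0 ⊗ₜ[ℂ] w 1) (w 1 ⊗ₜ[ℂ] w 1) = 0 := by
    have h : q (w 0 ⊗ₜ[ℂ] w 1 + w 1 ⊗ₜ[ℂ] w 1) = 0 := by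
      rw [hq]; exact ⟨w 0 + w 1, w 1, by rw [add_tmul]⟩
    simp [QuadraticMap.polar, h, hq0]
  have hp4 : QuadraticMap.polar (⇑q) (w 1 ⊗ₜ[ℂ] w 0) (w 1 ⊗ₜ[ℂ] w 1) = 0 := by
    have h : q (w 1 ⊗ₜ[ℂ] w 0 + w 1 ⊗ₜ[ℂ] w 1) = 0 := by
      rw [hq]; exact ⟨w 1, w 0 + w 1, by rw [tmul_add]⟩
    simp [QuadraticMap.polar, h, hq0]
  set c := QuadraticMap.polar (⇑q) (w 0 ⊗ₜ[ℂ] w 0) (w 1 ⊗ₜ[ℂ] w 1) with hc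
  have hp5 : QuadraticMap.polar (⇑q) (w 0 ⊗ₜ[ℂ] w 1) (w 1 ⊗ₜ[ℂ] w 0) = -c := by
    have hall : q ((w 0 ⊗ₜ[ℂ] w 0 + w 0 ⊗ₜ[ℂ] w 1) + (w 1 ⊗ₜ[ℂ] w 0 + w 1 ⊗ₜ[ℂ] w 1)) = 0 := by
      rw [hq]
      exact ⟨w 0 + w 1, w 0 + w 1, by rw [add_tmul, tmul_add, tmul_add]⟩
    simp only [QuadraticMap.map_add (⇑q), QuadraticMap.polar_add_left,
      QuadraticMap.polar_add_right, hq0, hp1, hp2, hp3, hp4, ← hc] at hall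
    linear_combination hall
  have hcne : c ≠ 0 := by
    intro h0
    have h : q (w 0 ⊗ₜ[ℂ] w 0 + w 1 ⊗ₜ[ℂ] w 1) = 0 := by
      rw [QuadraticMap.map_add (⇑q), hq0, hq0, ← hc, h0]; ring
    obtain ⟨x, y, hxy⟩ := (hq _).1 h
    have hrep : ∀ i j : Fin 2,
        (w.tensorProduct w).repr (w 0 ⊗ₜ[ℂ] w 0 + w 1 ⊗ₜ[ℂ] w 1) (i, j)
          = w.repr y j * w.repr x i := by
      intro i j
      rw [hxy, Module.Basis.tensorProduct_repr_tmul_apply, smul_eq_mul]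
    have h00 := hrep 0 0
    have h01 := hrep 0 1
    have h10 := hrep 1 0
    have h11 := hrep 1 1
    have e00 : (w.tensorProduct w).repr (w 0 ⊗ₜ[ℂ] w 0 + w 1 ⊗ₜ[ℂ] w 1) (0, 0) = 1 := by
      rw [(Module.Basis.tensorProduct_apply w w 0 0).symm, (Module.Basis.tensorProduct_apply w w 1 1).symm]
      simp [Module.Basis.repr_self, Finsupp.single_apply]
    have e11 : (w.tensorProduct w).repr (w 0 ⊗ₜ[ℂ] w 0 + w 1 ⊗ₜ[ℂ] w 1) (1, 1) = 1 := by
      rw [(Module.Basis.tensorProduct_apply w w 0 0).symm, (Module.Basis.tensorProduct_apply w w 1 1).symm]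
      simp [Module.Basis.repr_self, Finsupp.single_apply]
    have e01 : (w.tensorProduct w).repr (w 0 ⊗ₜ[ℂ] w 0 + w 1 ⊗ₜ[ℂ] w 1) (0, 1) = 0 := by
      rw [(Module.Basis.tensorProduct_apply w w 0 0).symm, (Module.Basis.tensorProduct_apply w w 1 1).symm]
      simp [Module.Basis.repr_self, Finsupp.single_apply, Prod.ext_iff]
    have e10 : (w.tensorProduct w).repr (w 0 ⊗ₜ[ℂ] w 0 + w 1 ⊗ₜ[ℂ] w 1) (1, 0) = 0 := by
      rw [(Module.Basis.tensorProduct_apply w w 0 0).symm, (Module.Basis.tensorProduct_apply w w 1 1).symm]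
      simp [Module.Basis.repr_self, Finsupp.single_apply, Prod.ext_iff]
    have A : w.repr y 0 * w.repr x 0 = 1 := by rw [← h00, e00]
    have B : w.repr y 1 * w.repr x 1 = 1 := by rw [← h11, e11]
    have C : w.repr y 1 * w.repr x 0 = 0 := by rw [← h01, e01]
    have hcontr : (1 : ℂ) = 0 := by
      calc (1 : ℂ) = (w.repr y 0 * w.repr x 0) * (w.repr y 1 * w.repr x 1) := by
            rw [A, B]; ring
        _ = (w.repr y 1 * w.repr x 0) * (w.repr y 0 * w.repr x 1) := by ring
        _ = 0 := by rw [C]; ring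
    exact one_ne_zero hcontr
  refine ⟨c, hcne, ?_⟩
  have hgen : ∀ s t u v' : ℂ,
      q ((s • (w 0 ⊗ₜ[ℂ] w 0) + t • (w 0 ⊗ₜ[ℂ] w 1))
        + (u • (w 1 ⊗ₜ[ℂ] w 0) + v' • (w 1 ⊗ₜ[ℂ] w 1))) = c * (s * v' - t * u) := by
    intro s t u v'
    simp only [QuadraticMap.map_add (⇑q), QuadraticMap.map_smul,
      QuadraticMap.polar_add_left, QuadraticMap.polar_add_right,
      QuadraticMap.polar_smul_left, QuadraticMap.polar_smul_right, smul_eq_mul,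
      hq0, hp1, hp2, hp3, hp4, hp5, ← hc]
    ring
  intro v
  have hv := Module.Basis.sum_repr (w.tensorProduct w) v
  rw [Fintype.sum_prod_type, Fin.sum_univ_two, Fin.sum_univ_two, Fin.sum_univ_two] at hv
  conv_lhs => rw [← hv]
  simp only [Module.Basis.tensorProduct_apply]
  exact hgen _ _ _ _

lemma polar_formula (w : Module.Basis (Fin 2) ℂ E1) (q : QuadraticForm ℂ (E1 ⊗[ℂ] E1)) (c : ℂ)
    (hqf : ∀ v : E1 ⊗[ℂ] E1,
      q v = c * ((w.tensorProduct w).repr v (0,0) * (w.tensorProduct w).repr v (1,1)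
        - (w.tensorProduct w).repr v (0,1) * (w.tensorProduct w).repr v (1,0))) :
    ∀ u v : E1 ⊗[ℂ] E1, QuadraticMap.polar (⇑q) u v
      = c * ((w.tensorProduct w).repr u (0,0) * (w.tensorProduct w).repr v (1,1)
        + (w.tensorProduct w).repr u (1,1) * (w.tensorProduct w).repr v (0,0)
        - (w.tensorProduct w).repr u (0,1) * (w.tensorProduct w).repr v (1,0)
        - (w.tensorProduct w).repr u (1,0) * (w.tensorProduct w).repr v (0,1)) := by
  intro u v
  simp only [QuadraticMap.polar, hqf, map_add, Finsupp.add_apply]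
  ring

lemma span_pair_finrank_le {M : Type*} [AddCommGroup M] [Module ℂ M] (a b : M) :
    Module.finrank ℂ (Submodule.span ℂ ({a, b} : Set M)) ≤ 2 := by
  classical
  refine (finrank_span_le_card (R := ℂ) ({a, b} : Set M)).trans ?_
  refine (Finset.card_le_card (s := ({a, b} : Set M).toFinset) (t := {a, b}) ?_).trans ?_
  · intro z hz
    simp only [Set.mem_toFinset, Set.mem_insert_iff, Set.mem_singleton_iff] at hz
    simpa using hz
  · exact (Finset.card_insert_le _ _).trans (by simp)

end Aux
theorem stmt_8 {E1 : Type*} [AddCommGroup E1] [Module ℂ E1]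
    (h1 : Module.finrank ℂ E1 = 2)
    (E2 : Submodule ℂ (E1 ⊗[ℂ] E1)) (E3 : Submodule ℂ ((E1 ⊗[ℂ] E1) ⊗[ℂ] E1))
    (h2 : Module.finrank ℂ E2 = 2) (h3 : Module.finrank ℂ E3 = 2)
    (hsub : E3 ≤ leftTensorSub (L3 := E1) E2 ⊓ rightTensorSub (L1 := E1) E2)
    (q : QuadraticForm ℂ (E1 ⊗[ℂ] E1))
    (hq : ∀ v : E1 ⊗[ℂ] E1, q v = 0 ↔ ∃ x y : E1, v = x ⊗ₜ[ℂ] y)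
    (hrank : quadRankOn q E2 = 1) :
    ∃ (b : Module.Basis (Fin 2) ℂ E1) (l : ℂ), l ≠ 0 ∧
      E3 = Submodule.span ℂ
        {(b 0 ⊗ₜ[ℂ] b 0) ⊗ₜ[ℂ] b 0,
         (b 1 ⊗ₜ[ℂ] b 0) ⊗ₜ[ℂ] b 0 + l • ((b 0 ⊗ₜ[ℂ] b 1) ⊗ₜ[ℂ] b 0)
           + l ^ 2 • ((b 0 ⊗ₜ[ℂ] b 0) ⊗ₜ[ℂ] b 1)} := by
  classical
  haveI hfd1 : FiniteDimensional ℂ E1 := FiniteDimensional.of_finrank_pos (by omega)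
  haveI hfd2 : FiniteDimensional ℂ E2 := FiniteDimensional.of_finrank_pos (by omega)
  haveI hfd3 : FiniteDimensional ℂ E3 := FiniteDimensional.of_finrank_pos (by omega)
  unfold quadRankOn at hrank
  -- a nonzero kernel element of the restricted polar form
  have hker : Module.finrank ℂ (LinearMap.ker (QuadraticMap.polarBilin (q.comp E2.subtype))) = 1 := by
    have h := LinearMap.finrank_range_add_finrank_ker (QuadraticMap.polarBilin (q.comp E2.subtype))
    rw [hrank, h2] at h; omega
  have hkerne : LinearMap.ker (QuadraticMap.polarBilin (q.comp E2.subtype)) ≠ ⊥ := by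
    intro hbot
    rw [hbot, finrank_bot] at hker; omega
  obtain ⟨P, hPker, hPne⟩ := Submodule.exists_mem_ne_zero_of_ne_bot hkerne
  have hPpol : ∀ z : E2, QuadraticMap.polar (⇑q) (↑P) (↑z) = 0 := by
    intro z
    have h := LinearMap.mem_ker.mp hPker
    have h2' : QuadraticMap.polarBilin (q.comp E2.subtype) P z = 0 := by rw [h]; rfl
    rw [QuadraticMap.polarBilin_apply_apply] at h2'
    simpa [QuadraticMap.polar, QuadraticMap.comp_apply] using h2'
  have hqP : q ↑P = 0 := by
    have h := hPpol P
    rw [QuadraticMap.polar_self] at h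
    simpa using h
  obtain ⟨x, y, hPxy⟩ := (hq _).1 hqP
  have hPne' : (↑P : E1 ⊗[ℂ] E1) ≠ 0 := fun h => hPne (Submodule.coe_eq_zero.mp h)
  have hxne : x ≠ 0 := by rintro rfl; exact hPne' (by rw [hPxy, zero_tmul])
  have hyne : y ≠ 0 := by rintro rfl; exact hPne' (by rw [hPxy, tmul_zero])
  -- an element with nonzero q-value
  have hV : ∃ V : E2, q ↑V ≠ 0 := by
    by_contra hVn
    push_neg at hVn
    have hzero : QuadraticMap.polarBilin (q.comp E2.subtype) = 0 := by
      apply LinearMap.ext; intro a; apply LinearMap.ext; intro b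
      rw [QuadraticMap.polarBilin_apply_apply]
      have h1' : q ((↑a : E1 ⊗[ℂ] E1) + ↑b) = 0 := by
        rw [← Submodule.coe_add]; exact hVn (a + b)
      simp [QuadraticMap.polar, QuadraticMap.comp_apply, h1', hVn a, hVn b]
    rw [hzero, LinearMap.range_zero, finrank_bot] at hrank
    omega
  obtain ⟨V, hqV⟩ := hV
  have hPVpol : QuadraticMap.polar (⇑q) (↑P : E1 ⊗[ℂ] E1) (↑V) = 0 := hPpol V
  have hVne' : (↑V : E1 ⊗[ℂ] E1) ≠ 0 := by
    intro h0; rw [h0, map_zero] at hqV; exact hqV rfl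
  -- E2 is spanned by P and V
  have hli : LinearIndependent ℂ ![(↑P : E1 ⊗[ℂ] E1), ↑V] := by
    rw [linearIndependent_fin2]
    refine ⟨by simpa using hVne', ?_⟩
    intro a
    simp only [Matrix.cons_val_one, Matrix.head_cons, Matrix.cons_val_zero]
    intro ha
    have hq' : q ((a : ℂ) • (↑V : E1 ⊗[ℂ] E1)) = 0 := by rw [ha]; exact hqP
    rw [QuadraticMap.map_smul, smul_eq_mul] at hq'
    have ha0 : a = 0 := by
      rcases mul_eq_zero.mp hq' with h | h
      · rcases mul_eq_zero.mp h with h | h <;> exact h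
      · exact absurd h hqV
    rw [ha0, zero_smul] at ha
    exact hPne' ha.symm
  have hspanle : Submodule.span ℂ {(↑P : E1 ⊗[ℂ] E1), ↑V} ≤ E2 := by
    rw [Submodule.span_le]
    rintro z hz
    rcases hz with rfl | hz
    · exact P.2
    · rcases hz with rfl; exact V.2
  have hrange : Set.range ![(↑P : E1 ⊗[ℂ] E1), ↑V] = {(↑P : E1 ⊗[ℂ] E1), ↑V} := by
    ext z; simp [Fin.exists_fin_two, or_comm, eq_comm]
  have hspanrank : Module.finrank ℂ (Submodule.span ℂ {(↑P : E1 ⊗[ℂ] E1), ↑V}) = 2 := by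
    have h := finrank_span_eq_card hli
    rw [hrange] at h
    simpa using h
  have hE2span : E2 = Submodule.span ℂ {(↑P : E1 ⊗[ℂ] E1), ↑V} :=
    (Submodule.eq_of_le_of_finrank_le hspanle (by rw [hspanrank, h2])).symm
  -- case split on whether y is proportional to x
  by_cases hyx : ∃ μ : ℂ, μ • x = y
  · -- Case A : P = μ • (x ⊗ x)
    obtain ⟨μ, hμ⟩ := hyx
    have hμne : μ ≠ 0 := by rintro rfl; rw [zero_smul] at hμ; exact hyne hμ.symm
    -- extend x to a basis
    have hu : ∃ u : E1, u ∉ Submodule.span ℂ {x} := by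
      by_contra h
      push_neg at h
      have htop : (⊤ : Submodule ℂ E1) ≤ Submodule.span ℂ {x} := fun z _ => h z
      have h1' : Module.finrank ℂ E1 ≤ 1 := by
        calc Module.finrank ℂ E1 = Module.finrank ℂ (⊤ : Submodule ℂ E1) := (finrank_top ℂ E1).symm
          _ ≤ Module.finrank ℂ (Submodule.span ℂ {x}) := Submodule.finrank_mono htop
          _ = 1 := finrank_span_singleton hxne
      omega
    obtain ⟨u, hu⟩ := hu
    have hui : LinearIndependent ℂ ![x, u] := by
      rw [linearIndependent_fin2]
      refine ⟨?_, ?_⟩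
      · simp only [Matrix.cons_val_one, Matrix.head_cons, Matrix.cons_val_zero]
        intro h0; exact hu (h0 ▸ Submodule.zero_mem _)
      · intro a
        simp only [Matrix.cons_val_one, Matrix.head_cons, Matrix.cons_val_zero]
        intro ha
        have hane : a ≠ 0 := by rintro rfl; rw [zero_smul] at ha; exact hxne ha.symm
        exact hu (Submodule.mem_span_singleton.mpr
          ⟨a⁻¹, by rw [← ha, smul_smul, inv_mul_cancel₀ hane, one_smul]⟩)
    set w : Module.Basis (Fin 2) ℂ E1 :=
      basisOfLinearIndependentOfCardEqFinrank hui (by rw [h1]; rfl) with hwdef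
    have hwc : ⇑w = ![x, u] := coe_basisOfLinearIndependentOfCardEqFinrank _ _
    have hw0 : w 0 = x := by rw [hwc]; rfl
    obtain ⟨c, hcne, hqf⟩ := q_formula w q hq
    have hpol := polar_formula w q c hqf
    have hPval : (↑P : E1 ⊗[ℂ] E1) = μ • (w 0 ⊗ₜ[ℂ] w 0) := by
      rw [hPxy, hw0, ← hμ, tmul_smul]
    have hrP00 : (w.tensorProduct w).repr ↑P (0,0) = μ := by
      rw [hPval, ← Module.Basis.tensorProduct_apply]
      simp [Module.Basis.repr_self, Finsupp.single_apply]
    have hrP01 : (w.tensorProduct w).repr ↑P (0,1) = 0 := by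
      rw [hPval, ← Module.Basis.tensorProduct_apply]
      simp [Module.Basis.repr_self, Finsupp.single_apply, Prod.ext_iff]
    have hrP10 : (w.tensorProduct w).repr ↑P (1,0) = 0 := by
      rw [hPval, ← Module.Basis.tensorProduct_apply]
      simp [Module.Basis.repr_self, Finsupp.single_apply, Prod.ext_iff]
    have hrP11 : (w.tensorProduct w).repr ↑P (1,1) = 0 := by
      rw [hPval, ← Module.Basis.tensorProduct_apply]
      simp [Module.Basis.repr_self, Finsupp.single_apply, Prod.ext_iff]
    -- V coordinates
    have hv11 : (w.tensorProduct w).repr ↑V (1,1) = 0 := by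
      have h := hPVpol
      rw [hpol, hrP00, hrP01, hrP10, hrP11] at h
      have h' : c * (μ * (w.tensorProduct w).repr ↑V (1,1)) = 0 := by linear_combination h
      rcases mul_eq_zero.mp h' with h'' | h''
      · exact absurd h'' hcne
      · rcases mul_eq_zero.mp h'' with h3' | h3'
        · exact absurd h3' hμne
        · exact h3'
    have hv01 : (w.tensorProduct w).repr ↑V (0,1) ≠ 0 := by
      intro h0; apply hqV; rw [hqf, hv11, h0]; ring
    have hv10 : (w.tensorProduct w).repr ↑V (1,0) ≠ 0 := by
      intro h0; apply hqV; rw [hqf, hv11, h0]; ring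
    -- membership conditions for E2
    have hcond : ∀ M, M ∈ E2 → (w.tensorProduct w).repr M (1,1) = 0 ∧
        (w.tensorProduct w).repr ↑V (1,0) * (w.tensorProduct w).repr M (0,1)
          = (w.tensorProduct w).repr ↑V (0,1) * (w.tensorProduct w).repr M (1,0) := by
      intro M hM
      rw [hE2span] at hM
      obtain ⟨s, t, rfl⟩ := Submodule.mem_span_pair.mp hM
      constructor
      · simp only [map_add, map_smul, Finsupp.add_apply, Finsupp.smul_apply, smul_eq_mul]
        rw [hrP11, hv11]; ring
      · simp only [map_add, map_smul, Finsupp.add_apply, Finsupp.smul_apply, smul_eq_mul]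
        rw [hrP01, hrP10]; ring
    set l : ℂ := (w.tensorProduct w).repr ↑V (0,1) / (w.tensorProduct w).repr ↑V (1,0) with hldef
    have hlne : l ≠ 0 := div_ne_zero hv01 hv10
    refine ⟨w, l, hlne, ?_⟩
    have hle : E3 ≤ Submodule.span ℂ
        {(w 0 ⊗ₜ[ℂ] w 0) ⊗ₜ[ℂ] w 0,
         (w 1 ⊗ₜ[ℂ] w 0) ⊗ₜ[ℂ] w 0 + l • ((w 0 ⊗ₜ[ℂ] w 1) ⊗ₜ[ℂ] w 0)
           + l ^ 2 • ((w 0 ⊗ₜ[ℂ] w 0) ⊗ₜ[ℂ] w 1)} := by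
      intro T hT
      obtain ⟨hTl, hTr⟩ := hsub hT
      have c3 : ∀ k : Fin 2,
          ((w.tensorProduct w).tensorProduct w).repr T ((1,1),k) = 0 ∧
          (w.tensorProduct w).repr ↑V (1,0) * ((w.tensorProduct w).tensorProduct w).repr T ((0,1),k)
            = (w.tensorProduct w).repr ↑V (0,1) * ((w.tensorProduct w).tensorProduct w).repr T ((1,0),k) := by
        intro k
        have h := hcond _ (slice3_mem_of_mem_left hTl (w.coord k))
        rwa [repr_slice3, repr_slice3, repr_slice3] at h
      have c1 : ∀ i : Fin 2,
          ((w.tensorProduct w).tensorProduct w).repr T ((i,1),1) = 0 ∧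
          (w.tensorProduct w).repr ↑V (1,0) * ((w.tensorProduct w).tensorProduct w).repr T ((i,0),1)
            = (w.tensorProduct w).repr ↑V (0,1) * ((w.tensorProduct w).tensorProduct w).repr T ((i,1),0) := by
        intro i
        have h := hcond _ (slice1_mem_of_mem_right hTr (w.coord i))
        rwa [repr_slice1, repr_slice1, repr_slice1] at h
      have z110 : ((w.tensorProduct w).tensorProduct w).repr T ((1,1),0) = 0 := (c3 0).1
      have z111 : ((w.tensorProduct w).tensorProduct w).repr T ((1,1),1) = 0 := (c3 1).1
      have z011 : ((w.tensorProduct w).tensorProduct w).repr T ((0,1),1) = 0 := (c1 0).1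
      have z101 : ((w.tensorProduct w).tensorProduct w).repr T ((1,0),1) = 0 := by
        have h := (c1 1).2
        rw [z110] at h
        have h' : (w.tensorProduct w).repr ↑V (1,0)
            * ((w.tensorProduct w).tensorProduct w).repr T ((1,0),1) = 0 := by
          linear_combination h
        rcases mul_eq_zero.mp h' with h'' | h''
        · exact absurd h'' hv10
        · exact h''
      have hlmul : l * (w.tensorProduct w).repr ↑V (1,0) = (w.tensorProduct w).repr ↑V (0,1) := by
        rw [hldef]; exact div_mul_cancel₀ _ hv10
      have h010 : ((w.tensorProduct w).tensorProduct w).repr T ((0,1),0)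
          = l * ((w.tensorProduct w).tensorProduct w).repr T ((1,0),0) := by
        apply mul_left_cancel₀ hv10
        linear_combination (c3 0).2
          - ((w.tensorProduct w).tensorProduct w).repr T ((1,0),0) * hlmul
      have h001 : ((w.tensorProduct w).tensorProduct w).repr T ((0,0),1)
          = l ^ 2 * ((w.tensorProduct w).tensorProduct w).repr T ((1,0),0) := by
        apply mul_left_cancel₀ hv10
        linear_combination (c1 0).2 + (w.tensorProduct w).repr ↑V (0,1) * h010
          - l * ((w.tensorProduct w).tensorProduct w).repr T ((1,0),0) * hlmul
      have hTsum := Module.Basis.sum_repr ((w.tensorProduct w).tensorProduct w) T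
      rw [Fintype.sum_prod_type, Fintype.sum_prod_type, Fin.sum_univ_two, Fin.sum_univ_two,
        Fin.sum_univ_two, Fin.sum_univ_two, Fin.sum_univ_two, Fin.sum_univ_two,
        Fin.sum_univ_two] at hTsum
      have hT2 : T = ((w.tensorProduct w).tensorProduct w).repr T ((0,0),0) • ((w 0 ⊗ₜ[ℂ] w 0) ⊗ₜ[ℂ] w 0)
          + ((w.tensorProduct w).tensorProduct w).repr T ((1,0),0) •
            ((w 1 ⊗ₜ[ℂ] w 0) ⊗ₜ[ℂ] w 0 + l • ((w 0 ⊗ₜ[ℂ] w 1) ⊗ₜ[ℂ] w 0)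
              + l ^ 2 • ((w 0 ⊗ₜ[ℂ] w 0) ⊗ₜ[ℂ] w 1)) := by
        conv_lhs => rw [← hTsum]
        simp only [Module.Basis.tensorProduct_apply]
        rw [z110, z111, z011, z101, h010, h001]
        module
      rw [hT2]
      exact Submodule.add_mem _
        (Submodule.smul_mem _ _ (Submodule.subset_span (by left; rfl)))
        (Submodule.smul_mem _ _ (Submodule.subset_span (by right; rfl)))
    haveI : FiniteDimensional ℂ (Submodule.span ℂ
        {(w 0 ⊗ₜ[ℂ] w 0) ⊗ₜ[ℂ] w 0,
         (w 1 ⊗ₜ[ℂ] w 0) ⊗ₜ[ℂ] w 0 + l • ((w 0 ⊗ₜ[ℂ] w 1) ⊗ₜ[ℂ] w 0)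
           + l ^ 2 • ((w 0 ⊗ₜ[ℂ] w 0) ⊗ₜ[ℂ] w 1)}) :=
      FiniteDimensional.span_of_finite ℂ (Set.toFinite _)
    exact Submodule.eq_of_le_of_finrank_le hle ((span_pair_finrank_le _ _).trans (by rw [h3]))
  · -- Case B : x, y independent; leads to a contradiction
    exfalso
    have hxyi : LinearIndependent ℂ ![x, y] := by
      rw [linearIndependent_fin2]
      refine ⟨by simpa using hyne, ?_⟩
      intro a
      simp only [Matrix.cons_val_one, Matrix.head_cons, Matrix.cons_val_zero]
      intro ha
      have hane : a ≠ 0 := by rintro rfl; rw [zero_smul] at ha; exact hxne ha.symm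
      exact hyx ⟨a⁻¹, by rw [← ha, smul_smul, inv_mul_cancel₀ hane, one_smul]⟩
    set w : Module.Basis (Fin 2) ℂ E1 :=
      basisOfLinearIndependentOfCardEqFinrank hxyi (by rw [h1]; rfl) with hwdef
    have hwc : ⇑w = ![x, y] := coe_basisOfLinearIndependentOfCardEqFinrank _ _
    have hw0 : w 0 = x := by rw [hwc]; rfl
    have hw1 : w 1 = y := by rw [hwc]; rfl
    obtain ⟨c, hcne, hqf⟩ := q_formula w q hq
    have hpol := polar_formula w q c hqf
    have hPval : (↑P : E1 ⊗[ℂ] E1) = w 0 ⊗ₜ[ℂ] w 1 := by rw [hPxy, hw0, hw1]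
    have hrP00 : (w.tensorProduct w).repr ↑P (0,0) = 0 := by
      rw [hPval, (Module.Basis.tensorProduct_apply w w 0 1).symm, Module.Basis.repr_self]
      exact Finsupp.single_eq_of_ne (by decide)
    have hrP01 : (w.tensorProduct w).repr ↑P (0,1) = 1 := by
      rw [hPval, (Module.Basis.tensorProduct_apply w w 0 1).symm, Module.Basis.repr_self]
      exact Finsupp.single_eq_same
    have hrP10 : (w.tensorProduct w).repr ↑P (1,0) = 0 := by
      rw [hPval, (Module.Basis.tensorProduct_apply w w 0 1).symm, Module.Basis.repr_self]
      exact Finsupp.single_eq_of_ne (by decide)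
    have hrP11 : (w.tensorProduct w).repr ↑P (1,1) = 0 := by
      rw [hPval, (Module.Basis.tensorProduct_apply w w 0 1).symm, Module.Basis.repr_self]
      exact Finsupp.single_eq_of_ne (by decide)
    have hv10 : (w.tensorProduct w).repr ↑V (1,0) = 0 := by
      have h := hPVpol
      rw [hpol, hrP00, hrP01, hrP10, hrP11] at h
      have h' : c * (w.tensorProduct w).repr ↑V (1,0) = 0 := by linear_combination -h
      rcases mul_eq_zero.mp h' with h'' | h''
      · exact absurd h'' hcne
      · exact h''
    have hv00 : (w.tensorProduct w).repr ↑V (0,0) ≠ 0 := by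
      intro h0; apply hqV; rw [hqf, hv10, h0]; ring
    have hv11 : (w.tensorProduct w).repr ↑V (1,1) ≠ 0 := by
      intro h0; apply hqV; rw [hqf, hv10, h0]; ring
    have hcond : ∀ M, M ∈ E2 → (w.tensorProduct w).repr M (1,0) = 0 ∧
        (w.tensorProduct w).repr ↑V (1,1) * (w.tensorProduct w).repr M (0,0)
          = (w.tensorProduct w).repr ↑V (0,0) * (w.tensorProduct w).repr M (1,1) := by
      intro M hM
      rw [hE2span] at hM
      obtain ⟨s, t, rfl⟩ := Submodule.mem_span_pair.mp hM
      constructor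
      · simp only [map_add, map_smul, Finsupp.add_apply, Finsupp.smul_apply, smul_eq_mul]
        rw [hrP10, hv10]; ring
      · simp only [map_add, map_smul, Finsupp.add_apply, Finsupp.smul_apply, smul_eq_mul]
        rw [hrP00, hrP11]; ring
    -- every element of E3 is zero
    have hE3bot : E3 ≤ ⊥ := by
      intro T hT
      obtain ⟨hTl, hTr⟩ := hsub hT
      have c3 : ∀ k : Fin 2,
          ((w.tensorProduct w).tensorProduct w).repr T ((1,0),k) = 0 ∧
          (w.tensorProduct w).repr ↑V (1,1) * ((w.tensorProduct w).tensorProduct w).repr T ((0,0),k)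
            = (w.tensorProduct w).repr ↑V (0,0) * ((w.tensorProduct w).tensorProduct w).repr T ((1,1),k) := by
        intro k
        have h := hcond _ (slice3_mem_of_mem_left hTl (w.coord k))
        rwa [repr_slice3, repr_slice3, repr_slice3] at h
      have c1 : ∀ i : Fin 2,
          ((w.tensorProduct w).tensorProduct w).repr T ((i,1),0) = 0 ∧
          (w.tensorProduct w).repr ↑V (1,1) * ((w.tensorProduct w).tensorProduct w).repr T ((i,0),0)
            = (w.tensorProduct w).repr ↑V (0,0) * ((w.tensorProduct w).tensorProduct w).repr T ((i,1),1) := by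
        intro i
        have h := hcond _ (slice1_mem_of_mem_right hTr (w.coord i))
        rwa [repr_slice1, repr_slice1, repr_slice1] at h
      have z100 : ((w.tensorProduct w).tensorProduct w).repr T ((1,0),0) = 0 := (c3 0).1
      have z101 : ((w.tensorProduct w).tensorProduct w).repr T ((1,0),1) = 0 := (c3 1).1
      have z010 : ((w.tensorProduct w).tensorProduct w).repr T ((0,1),0) = 0 := (c1 0).1
      have z110 : ((w.tensorProduct w).tensorProduct w).repr T ((1,1),0) = 0 := (c1 1).1
      have z111 : ((w.tensorProduct w).tensorProduct w).repr T ((1,1),1) = 0 := by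
        have h := (c1 1).2
        rw [z100] at h
        have h' : (w.tensorProduct w).repr ↑V (0,0)
            * ((w.tensorProduct w).tensorProduct w).repr T ((1,1),1) = 0 := by
          linear_combination -h
        rcases mul_eq_zero.mp h' with h'' | h''
        · exact absurd h'' hv00
        · exact h''
      have z000 : ((w.tensorProduct w).tensorProduct w).repr T ((0,0),0) = 0 := by
        have h := (c3 0).2
        rw [z110] at h
        have h' : (w.tensorProduct w).repr ↑V (1,1)
            * ((w.tensorProduct w).tensorProduct w).repr T ((0,0),0) = 0 := by
          linear_combination h
        rcases mul_eq_zero.mp h' with h'' | h''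
        · exact absurd h'' hv11
        · exact h''
      have z001 : ((w.tensorProduct w).tensorProduct w).repr T ((0,0),1) = 0 := by
        have h := (c3 1).2
        rw [z111] at h
        have h' : (w.tensorProduct w).repr ↑V (1,1)
            * ((w.tensorProduct w).tensorProduct w).repr T ((0,0),1) = 0 := by
          linear_combination h
        rcases mul_eq_zero.mp h' with h'' | h''
        · exact absurd h'' hv11
        · exact h''
      have z011 : ((w.tensorProduct w).tensorProduct w).repr T ((0,1),1) = 0 := by
        have h := (c1 0).2
        rw [z000] at h
        have h' : (w.tensorProduct w).repr ↑V (0,0)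
            * ((w.tensorProduct w).tensorProduct w).repr T ((0,1),1) = 0 := by
          linear_combination -h
        rcases mul_eq_zero.mp h' with h'' | h''
        · exact absurd h'' hv00
        · exact h''
      have hTsum := Module.Basis.sum_repr ((w.tensorProduct w).tensorProduct w) T
      rw [Fintype.sum_prod_type, Fintype.sum_prod_type, Fin.sum_univ_two, Fin.sum_univ_two,
        Fin.sum_univ_two, Fin.sum_univ_two, Fin.sum_univ_two, Fin.sum_univ_two,
        Fin.sum_univ_two] at hTsum
      have hT0 : T = 0 := by
        conv_lhs => rw [← hTsum]
        rw [z000, z001, z010, z011, z100, z101, z110, z111]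
        simp
      simp [hT0]
    have hE3 : E3 = ⊥ := le_bot_iff.mp hE3bot
    rw [hE3, finrank_bot] at h3
    omega
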